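/- Let d ≥ 2, let {𝒫^(b)}_{b=1}^{d+1} be a set of d+1 mutually unbiased measurements on ℂ^d with efficiency parameter κ, and let ρ be a density operator on ℂ^d. Then C(κ,ρ) = Σ_{b=1}^{d+1} Σ_{n=1}^{d} (p_n^(b))² ≤ κ + 1. -/

import Mathlib

open Matrix Finset Real
open scoped ComplexOrder

lemma aux_trace_mul_eq {d : ℕ} (A B : Matrix (Fin d) (Fin d) ℂ) :
    (A * B).trace = ∑ q : Fin d × Fin d, A q.1 q.2 * B q.2 q.1 := by
  simp [Matrix.trace, Matrix.diag, Matrix.mul_apply, Fintype.sum_prod_type]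

lemma aux_herm_cs {d : ℕ} (A B : Matrix (Fin d) (Fin d) ℂ)
    (hA : A.IsHermitian) (hB : B.IsHermitian) :
    ‖(A * B).trace‖ ^ 2 ≤ (A * A).trace.re * (B * B).trace.re := by
  have hAc : ∀ i j, A j i = (starRingEnd ℂ) (A i j) := fun i j =>
    (congrFun (congrFun hA j) i).symm
  have hBc : ∀ i j, B j i = (starRingEnd ℂ) (B i j) := fun i j =>
    (congrFun (congrFun hB j) i).symm
  have hAA : (A * A).trace.re = ∑ q : Fin d × Fin d, ‖A q.1 q.2‖ ^ 2 := by
    rw [aux_trace_mul_eq]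
    have h : ∀ q : Fin d × Fin d, A q.1 q.2 * A q.2 q.1 =
        ((‖A q.1 q.2‖ ^ 2 : ℝ) : ℂ) := fun q => by
      rw [hAc q.1 q.2, Complex.mul_conj, Complex.sq_norm]
    rw [Finset.sum_congr rfl fun q _ => h q, Complex.re_sum]
    exact Finset.sum_congr rfl fun q _ => Complex.ofReal_re _
  have hBB : (B * B).trace.re = ∑ q : Fin d × Fin d, ‖B q.2 q.1‖ ^ 2 := by
    rw [aux_trace_mul_eq]
    have h : ∀ q : Fin d × Fin d, B q.1 q.2 * B q.2 q.1 =
        ((‖B q.2 q.1‖ ^ 2 : ℝ) : ℂ) := fun q => by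
      rw [hBc q.1 q.2, Complex.mul_conj, Complex.norm_conj, Complex.sq_norm]
    rw [Finset.sum_congr rfl fun q _ => h q, Complex.re_sum]
    exact Finset.sum_congr rfl fun q _ => Complex.ofReal_re _
  have h1 : ‖(A * B).trace‖ ≤
      ∑ q : Fin d × Fin d, ‖A q.1 q.2‖ * ‖B q.2 q.1‖ := by
    rw [aux_trace_mul_eq]
    refine (norm_sum_le _ _).trans_eq ?_
    exact Finset.sum_congr rfl fun q _ => norm_mul _ _
  calc ‖(A * B).trace‖ ^ 2
      ≤ (∑ q : Fin d × Fin d, ‖A q.1 q.2‖ * ‖B q.2 q.1‖) ^ 2 :=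
        pow_le_pow_left₀ (norm_nonneg _) h1 2
    _ ≤ (∑ q : Fin d × Fin d, ‖A q.1 q.2‖ ^ 2) *
        (∑ q : Fin d × Fin d, ‖B q.2 q.1‖ ^ 2) :=
        Finset.sum_mul_sq_le_sq_mul_sq _ _ _
    _ = (A * A).trace.re * (B * B).trace.re := by rw [hAA, hBB]

lemma aux_trace_shift {d : ℕ} (A B : Matrix (Fin d) (Fin d) ℂ) (s : ℂ) :
    ((A - s • 1) * (B - s • 1)).trace
      = (A * B).trace - s * B.trace - s * A.trace + s ^ 2 * d := by
  simp [Matrix.sub_mul, Matrix.mul_sub, Matrix.smul_mul, Matrix.mul_smul,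
    Matrix.trace_sub, Matrix.trace_smul, Matrix.trace_one, smul_smul, smul_eq_mul]
  ring

lemma aux_trace_sq_le {d : ℕ} (ρ : Matrix (Fin d) (Fin d) ℂ)
    (hρ : ρ.PosSemidef) (hρtr : ρ.trace = 1) : (ρ * ρ).trace.re ≤ 1 := by
  have h := hρ.1
  set U : Matrix (Fin d) (Fin d) ℂ := (h.eigenvectorUnitary : Matrix (Fin d) (Fin d) ℂ) with hU
  set D : Matrix (Fin d) (Fin d) ℂ := Matrix.diagonal (RCLike.ofReal ∘ h.eigenvalues) with hD
  have hsU : star U * U = 1 := Matrix.mem_unitaryGroup_iff'.mp h.eigenvectorUnitary.2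
  have hspec : ρ = U * D * star U := h.spectral_theorem
  have htrD : D.trace = ((∑ i, h.eigenvalues i : ℝ) : ℂ) := by
    rw [hD, Matrix.trace_diagonal]
    push_cast
    rfl
  have hsum1 : ∑ i, h.eigenvalues i = 1 := by
    have e1 : ρ.trace = D.trace := by
      rw [hspec, Matrix.trace_mul_cycle, hsU, Matrix.one_mul]
    rw [hρtr, htrD] at e1
    exact_mod_cast e1.symm
  have hsq : (ρ * ρ).trace = ((∑ i, h.eigenvalues i ^ 2 : ℝ) : ℂ) := by
    have key : ρ * ρ = U * (D * D) * star U := by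
      rw [hspec]
      calc U * D * star U * (U * D * star U)
          = U * (D * ((star U * U) * (D * star U))) := by simp only [Matrix.mul_assoc]
        _ = U * (D * D) * star U := by rw [hsU, Matrix.one_mul]; simp only [Matrix.mul_assoc]
    rw [key, Matrix.trace_mul_cycle, hsU, Matrix.one_mul, hD,
      Matrix.diagonal_mul_diagonal, Matrix.trace_diagonal]
    push_cast
    simp [pow_two]
  rw [hsq, Complex.ofReal_re]
  calc ∑ i, h.eigenvalues i ^ 2 ≤ (∑ i, h.eigenvalues i) ^ 2 :=
        Finset.sum_sq_le_sq_sum_of_nonneg fun i _ => hρ.eigenvalues_nonneg i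
    _ = 1 := by rw [hsum1]; norm_num

theorem stmt3 (d : ℕ) (hd : 2 ≤ d) (κ : ℝ)
    (hκ1 : 1 / (d : ℝ) < κ) (hκ2 : κ ≤ 1)
    (P : Fin (d + 1) → Fin d → Matrix (Fin d) (Fin d) ℂ)
    (hpsd : ∀ b n, (P b n).PosSemidef)
    (hsum : ∀ b, ∑ n, P b n = 1)
    (htr1 : ∀ b n, (P b n).trace = 1)
    (htr2 : ∀ b b', b ≠ b' → ∀ n n', (P b n * P b' n').trace = ((1 / (d : ℝ) : ℝ) : ℂ))
    (htr3 : ∀ b n n', (P b n * P b n').trace =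
      if n = n' then ((κ : ℝ) : ℂ) else (((1 - κ) / ((d : ℝ) - 1) : ℝ) : ℂ))
    (ρ : Matrix (Fin d) (Fin d) ℂ) (hρ : ρ.PosSemidef) (hρtr : ρ.trace = 1)
    (p : Fin (d + 1) → Fin d → ℝ)
    (hp : ∀ b n, ((p b n : ℝ) : ℂ) = (P b n * ρ).trace) :
    ∑ b, ∑ n, (p b n) ^ 2 ≤ κ + 1 := by
  have hd0 : (0 : ℝ) < d := by positivity
  have hd' : (1 : ℝ) ≤ (d : ℝ) - 1 := by
    have : (2 : ℝ) ≤ d := by exact_mod_cast hd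
    linarith
  have hdne : (d : ℝ) ≠ 0 := ne_of_gt hd0
  -- definitions
  set v : Fin (d + 1) → Fin d → ℝ := fun b n => p b n - 1 / d with hv
  set s : ℂ := ((1 / (d : ℝ) : ℝ) : ℂ) with hs
  set Q : Fin (d + 1) → Fin d → Matrix (Fin d) (Fin d) ℂ :=
    fun b n => P b n - s • 1 with hQ
  set Δ : Matrix (Fin d) (Fin d) ℂ := ρ - s • 1 with hΔ
  set α : ℝ := κ - 1 / d with hα
  set lam : ℝ := α * d / ((d : ℝ) - 1) with hlam
  have hα0 : 0 < α := by rw [hα]; linarith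
  -- sum of v over n is zero
  have hpsum : ∀ b, ∑ n, p b n = 1 := by
    intro b
    have : ((∑ n, p b n : ℝ) : ℂ) = 1 := by
      push_cast
      rw [Finset.sum_congr rfl fun n _ => hp b n, ← Matrix.trace_sum, ← Matrix.sum_mul,
        hsum b, Matrix.one_mul, hρtr]
    exact_mod_cast this
  have hvsum : ∀ b, ∑ n, v b n = 0 := by
    intro b
    rw [hv]
    simp only [Finset.sum_sub_distrib, hpsum b, Finset.sum_const, Finset.card_univ,
      Fintype.card_fin, nsmul_eq_mul]
    field_simp
    simp
  -- trace identities
  have hQΔ : ∀ b n, (Q b n * Δ).trace = ((v b n : ℝ) : ℂ) := by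
    intro b n
    rw [hQ, hΔ, aux_trace_shift, htr1, hρtr, ← hp, hs, hv]
    push_cast
    field_simp
    ring
  have hQQd : ∀ b b', b ≠ b' → ∀ n n', (Q b n * Q b' n').trace = 0 := by
    intro b b' hbb n n'
    rw [hQ, aux_trace_shift, htr1, htr1, htr2 b b' hbb, hs]
    push_cast
    field_simp
    ring
  have hQQs : ∀ b n n', (Q b n * Q b n').trace =
      if n = n' then ((α : ℝ) : ℂ) else ((α / (1 - (d : ℝ)) : ℝ) : ℂ) := by
    intro b n n'
    rw [hQ, aux_trace_shift, htr1, htr1, htr3 b n n', hs, hα]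
    split
    · push_cast; field_simp; ring
    · have hdc : (d : ℂ) ≠ 0 := Nat.cast_ne_zero.mpr (by omega)
      have h1c : (d : ℂ) - 1 ≠ 0 := sub_ne_zero.mpr (by exact_mod_cast (by omega : d ≠ 1))
      have h2c : (1 : ℂ) - (d : ℂ) ≠ 0 := sub_ne_zero.mpr (by exact_mod_cast (by omega : 1 ≠ d))
      push_cast
      field_simp
      ring
  have hΔΔ : (Δ * Δ).trace = (ρ * ρ).trace - s := by
    rw [hΔ, aux_trace_shift, hρtr, hs]
    have hdc : (d : ℂ) ≠ 0 := Nat.cast_ne_zero.mpr (by omega)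
    push_cast
    field_simp
    ring
  -- Hermitian facts
  have hs1H : (s • (1 : Matrix (Fin d) (Fin d) ℂ)).IsHermitian := by
    unfold Matrix.IsHermitian
    rw [Matrix.conjTranspose_smul, Matrix.conjTranspose_one, hs, Complex.star_def,
      Complex.conj_ofReal]
  have hQH : ∀ b n, (Q b n).IsHermitian := fun b n => ((hpsd b n).1).sub hs1H
  have hΔH : Δ.IsHermitian := (hρ.1).sub hs1H
  set T : Matrix (Fin d) (Fin d) ℂ := ∑ b, ∑ n, ((v b n : ℝ) : ℂ) • Q b n with hT
  have hTH : T.IsHermitian := by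
    unfold Matrix.IsHermitian
    rw [hT]
    simp only [Matrix.conjTranspose_sum, Matrix.conjTranspose_smul, Complex.star_def,
      Complex.conj_ofReal]
    exact Finset.sum_congr rfl fun b _ => Finset.sum_congr rfl fun n _ => by rw [(hQH b n).eq]
  set S : ℝ := ∑ b, ∑ n, v b n ^ 2 with hS
  have hS0 : 0 ≤ S := Finset.sum_nonneg fun b _ => Finset.sum_nonneg fun n _ => sq_nonneg _
  -- trace of T * Δ
  have hTΔ : (T * Δ).trace = ((S : ℝ) : ℂ) := by
    rw [hT, hS]
    simp only [Matrix.sum_mul, Matrix.smul_mul, Matrix.trace_sum, Matrix.trace_smul,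
      smul_eq_mul]
    push_cast
    refine Finset.sum_congr rfl fun b _ => Finset.sum_congr rfl fun n _ => ?_
    rw [hQΔ b n]
    push_cast
    ring
  -- trace of T * T
  have hTT : (T * T).trace = ((lam * S : ℝ) : ℂ) := by
    have hinner : ∀ b n, (∑ b', ∑ n', ((v b' n' : ℝ) : ℂ) * (Q b' n' * Q b n).trace)
        = ((lam * v b n : ℝ) : ℂ) := by
      intro b n
      rw [Finset.sum_eq_single b]
      · have step : ∀ n', ((v b n' : ℝ) : ℂ) * (Q b n' * Q b n).trace
            = ((α / (1 - (d : ℝ)) : ℝ) : ℂ) * ((v b n' : ℝ) : ℂ)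
              + (if n' = n then (((α : ℝ) : ℂ) - ((α / (1 - (d : ℝ)) : ℝ) : ℂ))
                  * ((v b n' : ℝ) : ℂ) else 0) := by
          intro n'
          rw [hQQs b n' n]
          split <;> ring
        rw [Finset.sum_congr rfl fun n' _ => step n', Finset.sum_add_distrib,
          ← Finset.mul_sum, Finset.sum_ite_eq' Finset.univ n
            (fun n' => (((α : ℝ) : ℂ) - ((α / (1 - (d : ℝ)) : ℝ) : ℂ)) * ((v b n' : ℝ) : ℂ))]
        have hzero : ∑ n', ((v b n' : ℝ) : ℂ) = 0 := by
          rw [← Complex.ofReal_sum, hvsum b, Complex.ofReal_zero]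
        rw [hzero]
        simp only [mul_zero, zero_add, Finset.mem_univ, if_true]
        have h1c : (1 : ℂ) - (d : ℂ) ≠ 0 := sub_ne_zero.mpr (by exact_mod_cast (by omega : 1 ≠ d))
        have h2c : (d : ℂ) - 1 ≠ 0 := sub_ne_zero.mpr (by exact_mod_cast (by omega : d ≠ 1))
        have hdc : (d : ℂ) ≠ 0 := Nat.cast_ne_zero.mpr (by omega)
        rw [hlam, hα]
        push_cast
        field_simp
        ring
      · intro b' _ hbb'
        refine Finset.sum_eq_zero fun n' _ => ?_
        rw [hQQd b' b hbb' n' n, mul_zero]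
      · intro h
        exact absurd (Finset.mem_univ b) h
    rw [hT]
    simp only [Matrix.sum_mul, Matrix.mul_sum, Matrix.smul_mul, Matrix.mul_smul,
      Matrix.trace_sum, Matrix.trace_smul, smul_smul, smul_eq_mul]
    calc ∑ b, ∑ n, ((v b n : ℝ) : ℂ) * ∑ b', ∑ n', ((v b' n' : ℝ) : ℂ)
          * (Q b' n' * Q b n).trace
        = ∑ b, ∑ n, ((v b n : ℝ) : ℂ) * ((lam * v b n : ℝ) : ℂ) := by
          exact Finset.sum_congr rfl fun b _ => Finset.sum_congr rfl fun n _ => by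
            rw [hinner b n]
      _ = ((lam * S : ℝ) : ℂ) := by
          rw [hS]
          push_cast
          rw [Finset.mul_sum]
          refine Finset.sum_congr rfl fun b _ => ?_
          rw [Finset.mul_sum]
          exact Finset.sum_congr rfl fun n _ => by ring
  -- Cauchy-Schwarz
  have hcs := aux_herm_cs T Δ hTH hΔH
  rw [hTΔ] at hcs
  have habs : ‖((S : ℝ) : ℂ)‖ = S := by
    rw [Complex.norm_real, Real.norm_eq_abs, abs_of_nonneg hS0]
  rw [habs] at hcs
  have hTTre : (T * T).trace.re = lam * S := by rw [hTT, Complex.ofReal_re]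
  have hΔre : (Δ * Δ).trace.re ≤ 1 - 1 / d := by
    rw [hΔΔ, hs]
    have h1 := aux_trace_sq_le ρ hρ hρtr
    simp only [Complex.sub_re, Complex.ofReal_re]
    linarith
  rw [hTTre] at hcs
  -- conclude S ≤ α
  have hlam0 : 0 ≤ lam := by
    rw [hlam]
    positivity
  have hkey : S ≤ α := by
    rcases eq_or_lt_of_le hS0 with h0 | h0
    · rw [← h0]; linarith
    · have h1 : S ^ 2 ≤ lam * S * (1 - 1 / d) := by
        calc S ^ 2 ≤ lam * S * (Δ * Δ).trace.re := hcs
          _ ≤ lam * S * (1 - 1 / d) := by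
              apply mul_le_mul_of_nonneg_left hΔre (by positivity)
      have h2 : S ≤ lam * (1 - 1 / d) := by
        have hmul : S * S ≤ (lam * (1 - 1 / (d : ℝ))) * S := by
          calc S * S = S ^ 2 := (pow_two S).symm
            _ ≤ lam * S * (1 - 1 / d) := h1
            _ = (lam * (1 - 1 / (d : ℝ))) * S := by ring
        exact le_of_mul_le_mul_right hmul h0
      have hdm1 : (d : ℝ) - 1 ≠ 0 := by linarith
      have h3 : lam * (1 - 1 / d) = α := by
        rw [hlam]
        field_simp
        try ring
      exact h3 ▸ h2
  -- final computation
  have hfinal : ∑ b, ∑ n, p b n ^ 2 = S + (d + 1) * (1 / d) := by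
    rw [hS]
    have hb : ∀ b : Fin (d+1), ∑ n, p b n ^ 2 = (∑ n, v b n ^ 2) + 1 / d := by
      intro b
      have h1 : ∀ n, p b n ^ 2 = v b n ^ 2 + (2 / d) * v b n + 1 / d ^ 2 := by
        intro n
        rw [hv]
        simp only
        field_simp
        ring
      rw [Finset.sum_congr rfl fun n _ => h1 n, Finset.sum_add_distrib,
        Finset.sum_add_distrib, ← Finset.mul_sum, hvsum b, Finset.sum_const,
        Finset.card_univ, Fintype.card_fin, nsmul_eq_mul]
      field_simp
      ring
    rw [Finset.sum_congr rfl fun b _ => hb b, Finset.sum_add_distrib, Finset.sum_const,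
      Finset.card_univ, Fintype.card_fin, nsmul_eq_mul]
    push_cast
    ring
  rw [hfinal]
  have : ((d : ℝ) + 1) * (1 / d) = 1 + 1 / d := by field_simp
  rw [this]
  rw [hα] at hkey
  linarith
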